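/- Arm-wise high-probability bound: under the setup of the previous statement with β ∈ (0,1] and δ ∈ (0,1), for each fixed π ∈ Π, with probability at least 1 − δ, Σ_{t=1}^T g_t(π) ≤ Σ_{t=1}^T g̃_t(π) + ln(1/δ)/β, where g̃_t(π) = (g_t(π) 1{π_t=π} + β)/p_t(π). -/

import Mathlib

/-- The history (prefix of length `t`) of a path `ω` of arm choices. -/
def res {ι : Type*} {T : ℕ} (ω : Fin T → ι) (t : Fin T) : Fin (t : ℕ) → ι :=
  fun i => ω ⟨i, i.isLt.trans t.isLt⟩

lemma exp_neg_quad {x : ℝ} (hx : 0 ≤ x) : Real.exp (-x) ≤ 1 - x + x ^ 2 / 2 := by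
  have h1 : 1 + x + x ^ 2 / 2 ≤ Real.exp x := by
    have := Real.sum_le_exp_of_nonneg hx 3
    simp [Finset.sum_range_succ, Nat.factorial] at this
    nlinarith [this]
  have hpos : (0:ℝ) < 1 + x + x ^ 2 / 2 := by nlinarith
  have hq : (0:ℝ) < 1 - x + x ^ 2 / 2 := by nlinarith [sq_nonneg (x - 1)]
  rw [Real.exp_neg]
  have h2 : (Real.exp x)⁻¹ ≤ (1 + x + x ^ 2 / 2)⁻¹ := by
    exact inv_anti₀ hpos h1
  refine h2.trans ?_
  rw [inv_eq_one_div, div_le_iff₀ hpos]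
  nlinarith [pow_le_pow_left₀ hx (le_refl x), sq_nonneg (x ^ 2)]

lemma step_bound {β a q : ℝ} (hβ0 : 0 < β) (hβ1 : β ≤ 1) (ha0 : 0 ≤ a) (ha1 : a ≤ 1)
    (hq0 : 0 < q) (hq1 : q ≤ 1) :
    (1 - q) * Real.exp (β * a - β * ((a * 0 + β) / q))
      + q * Real.exp (β * a - β * ((a * 1 + β) / q)) ≤ 1 := by
  have hqne : q ≠ 0 := hq0.ne'
  have e0 : β * a - β * ((a * 0 + β) / q) = β * a - β ^ 2 / q := by field_simp; ring
  have e1 : β * a - β * ((a * 1 + β) / q) = (β * a - β ^ 2 / q) + (-(β * a / q)) := by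
    field_simp; ring
  rw [e0, e1, Real.exp_add]
  set E := Real.exp (β * a - β ^ 2 / q) with hE
  have hEpos : 0 < E := Real.exp_pos _
  have h1 : Real.exp (-(β * a / q)) ≤ 1 - β * a / q + (β * a / q) ^ 2 / 2 :=
    exp_neg_quad (by positivity)
  have key : (1 - q) + q * Real.exp (-(β * a / q)) ≤ 1 - β * a + β ^ 2 * a ^ 2 / (2 * q) := by
    have h2 := mul_le_mul_of_nonneg_left h1 hq0.le
    have e2 : q * (1 - β * a / q + (β * a / q) ^ 2 / 2) = q - β * a + β ^ 2 * a ^ 2 / (2 * q) := by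
      field_simp
    rw [e2] at h2
    linarith
  have h3 : 1 - β * a + β ^ 2 * a ^ 2 / (2 * q) ≤ Real.exp (-(β * a) + β ^ 2 * a ^ 2 / (2 * q)) := by
    have := Real.add_one_le_exp (-(β * a) + β ^ 2 * a ^ 2 / (2 * q))
    linarith
  calc (1 - q) * E + q * (E * Real.exp (-(β * a / q)))
      = E * ((1 - q) + q * Real.exp (-(β * a / q))) := by ring
    _ ≤ E * Real.exp (-(β * a) + β ^ 2 * a ^ 2 / (2 * q)) := by
        exact mul_le_mul_of_nonneg_left (key.trans h3) hEpos.le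
    _ = Real.exp ((β * a - β ^ 2 / q) + (-(β * a) + β ^ 2 * a ^ 2 / (2 * q))) := by
        rw [hE, ← Real.exp_add]
    _ ≤ 1 := by
        rw [show (1:ℝ) = Real.exp 0 by simp]
        apply Real.exp_le_exp.2
        have e3 : (β * a - β ^ 2 / q) + (-(β * a) + β ^ 2 * a ^ 2 / (2 * q))
            = (β ^ 2 * (a ^ 2 - 2)) / (2 * q) := by field_simp; ring
        rw [e3]
        apply div_nonpos_of_nonpos_of_nonneg
        · apply mul_nonpos_of_nonneg_of_nonpos (sq_nonneg β); nlinarith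
        · positivity

lemma res_snoc_castSucc {ι : Type*} {n : ℕ} (ω' : Fin n → ι) (x : ι) (t : Fin n) :
    res (Fin.snoc ω' x) (Fin.castSucc t) = res ω' t := by
  funext i
  exact Fin.snoc_castSucc (α := fun _ => ι) (x := x) (p := ω') (i := ⟨i.1, i.isLt.trans t.isLt⟩)

lemma res_snoc_last {ι : Type*} {n : ℕ} (ω' : Fin n → ι) (x : ι) :
    res (Fin.snoc ω' x) (Fin.last n) = ω' := by
  funext i
  exact Fin.snoc_castSucc (α := fun _ => ι) (x := x) (p := ω') (i := i)

lemma sum_prod_le {ι : Type*} [Fintype ι] : ∀ (T : ℕ)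
    (p : (t : Fin T) → (Fin (t : ℕ) → ι) → ι → ℝ), (∀ t h i, 0 ≤ p t h i) →
    ∀ (f : (t : Fin T) → (Fin (t : ℕ) → ι) → ι → ℝ), (∀ t h i, 0 ≤ f t h i) →
    (∀ t h, ∑ i, p t h i * f t h i ≤ 1) →
    ∑ ω : Fin T → ι, (∏ t, p t (res ω t) (ω t) * f t (res ω t) (ω t)) ≤ 1 := by
  intro T
  induction T with
  | zero => intro p _ f _ _; simp
  | succ n ih =>
    intro p hp0 f hf0 hpf
    rw [← (Fin.snocEquiv (fun _ => ι)).sum_comp, Fintype.sum_prod_type]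
    have hstep : ∀ (x : ι) (ω' : Fin n → ι),
        (∏ t : Fin (n+1), p t (res (Fin.snoc ω' x : Fin (n+1) → ι) t) ((Fin.snoc ω' x : Fin (n+1) → ι) t)
            * f t (res (Fin.snoc ω' x : Fin (n+1) → ι) t) ((Fin.snoc ω' x : Fin (n+1) → ι) t))
        = (∏ t : Fin n, p (Fin.castSucc t) (res ω' t) (ω' t)
            * f (Fin.castSucc t) (res ω' t) (ω' t))
          * (p (Fin.last n) ω' x * f (Fin.last n) ω' x) := by
      intro x ω'
      rw [Fin.prod_univ_castSucc]
      congr 1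
      · refine Finset.prod_congr rfl fun t _ => ?_
        rw [res_snoc_castSucc, Fin.snoc_castSucc]
      · rw [res_snoc_last, Fin.snoc_last]
    have e1 : ∑ x : ι, ∑ ω' : Fin n → ι,
        (∏ t : Fin (n+1), p t (res (Fin.snoc ω' x : Fin (n+1) → ι) t) ((Fin.snoc ω' x : Fin (n+1) → ι) t)
            * f t (res (Fin.snoc ω' x : Fin (n+1) → ι) t) ((Fin.snoc ω' x : Fin (n+1) → ι) t)) ≤ 1 := by
      rw [Finset.sum_comm]
      calc ∑ ω' : Fin n → ι, ∑ x : ι,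
            (∏ t : Fin (n+1), p t (res (Fin.snoc ω' x : Fin (n+1) → ι) t) ((Fin.snoc ω' x : Fin (n+1) → ι) t)
              * f t (res (Fin.snoc ω' x : Fin (n+1) → ι) t) ((Fin.snoc ω' x : Fin (n+1) → ι) t))
          = ∑ ω' : Fin n → ι,
            (∏ t : Fin n, p (Fin.castSucc t) (res ω' t) (ω' t)
              * f (Fin.castSucc t) (res ω' t) (ω' t))
            * ∑ x : ι, p (Fin.last n) ω' x * f (Fin.last n) ω' x := by
            refine Finset.sum_congr rfl fun ω' _ => ?_
            rw [Finset.mul_sum]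
            exact Finset.sum_congr rfl fun x _ => hstep x ω'
        _ ≤ ∑ ω' : Fin n → ι,
            (∏ t : Fin n, p (Fin.castSucc t) (res ω' t) (ω' t)
              * f (Fin.castSucc t) (res ω' t) (ω' t)) * 1 := by
            refine Finset.sum_le_sum fun ω' _ => ?_
            exact mul_le_mul_of_nonneg_left (hpf _ _)
              (Finset.prod_nonneg fun t _ => mul_nonneg (hp0 _ _ _) (hf0 _ _ _))
        _ ≤ 1 := by
            simp_rw [mul_one]
            exact ih (fun t => p (Fin.castSucc t)) (fun t h i => hp0 _ _ _)
              (fun t => f (Fin.castSucc t)) (fun t h i => hf0 _ _ _)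
              (fun t h => hpf _ _)
    exact e1

open Classical in
theorem exp3p_armwise_high_probability_bound {ι : Type*} [Fintype ι] [DecidableEq ι] (T : ℕ)
    (p : (t : Fin T) → (Fin (t : ℕ) → ι) → ι → ℝ)
    (hp_pos : ∀ t h i, 0 < p t h i)
    (hp_sum : ∀ t h, ∑ i, p t h i = 1)
    (g : (t : Fin T) → (Fin (t : ℕ) → ι) → ι → ℝ)
    (hg : ∀ t h i, g t h i ∈ Set.Icc (0:ℝ) 1)
    (β : ℝ) (hβ0 : 0 < β) (hβ1 : β ≤ 1)
    (δ : ℝ) (hδ0 : 0 < δ) (hδ1 : δ < 1) (π : ι) :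
    ∑ ω ∈ Finset.univ.filter (fun ω : Fin T → ι =>
        ¬ (∑ t, g t (res ω t) π
            ≤ (∑ t, (g t (res ω t) π * (if ω t = π then 1 else 0) + β) / p t (res ω t) π)
              + Real.log (1 / δ) / β)),
      (∏ t, p t (res ω t) (ω t)) ≤ δ := by
  have hf0 : ∀ (t : Fin T) (h : Fin (t:ℕ) → ι) (i : ι), (0:ℝ) ≤
      Real.exp (β * g t h π - β * ((g t h π * (if i = π then 1 else 0) + β) / p t h π)) :=
    fun t h i => (Real.exp_pos _).le
  set f : (t : Fin T) → (Fin (t : ℕ) → ι) → ι → ℝ := fun t h i =>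
    Real.exp (β * g t h π - β * ((g t h π * (if i = π then 1 else 0) + β) / p t h π)) with hfdef
  have hpf : ∀ t h, ∑ i, p t h i * f t h i ≤ 1 := by
    intro t h
    have hq1 : p t h π ≤ 1 := by
      rw [← hp_sum t h]
      exact Finset.single_le_sum (fun i _ => (hp_pos t h i).le) (Finset.mem_univ π)
    have hsb := step_bound hβ0 hβ1 (hg t h π).1 (hg t h π).2 (hp_pos t h π) hq1
    have hsplit : ∑ i, p t h i * f t h i
        = (1 - p t h π) * Real.exp (β * g t h π - β * ((g t h π * 0 + β) / p t h π))
          + p t h π * Real.exp (β * g t h π - β * ((g t h π * 1 + β) / p t h π)) := by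
      have e : ∀ i, p t h i * f t h i
          = p t h i * Real.exp (β * g t h π - β * ((g t h π * 0 + β) / p t h π))
            + (if i = π then p t h i *
                (Real.exp (β * g t h π - β * ((g t h π * 1 + β) / p t h π))
                - Real.exp (β * g t h π - β * ((g t h π * 0 + β) / p t h π))) else 0) := by
        intro i
        by_cases hi : i = π <;> simp [hfdef, hi] <;> ring
      rw [Finset.sum_congr rfl fun i _ => e i, Finset.sum_add_distrib, ← Finset.sum_mul,
        hp_sum, Finset.sum_ite_eq' Finset.univ π]
      simp only [Finset.mem_univ, if_true, one_mul]
      ring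
    rw [hsplit]; exact hsb
  have hmain := sum_prod_le T p (fun t h i => (hp_pos t h i).le) f hf0 hpf
  calc ∑ ω ∈ Finset.univ.filter (fun ω : Fin T → ι =>
        ¬ (∑ t, g t (res ω t) π
            ≤ (∑ t, (g t (res ω t) π * (if ω t = π then 1 else 0) + β) / p t (res ω t) π)
              + Real.log (1 / δ) / β)),
      (∏ t, p t (res ω t) (ω t))
      ≤ ∑ ω ∈ Finset.univ.filter (fun ω : Fin T → ι =>
        ¬ (∑ t, g t (res ω t) π
            ≤ (∑ t, (g t (res ω t) π * (if ω t = π then 1 else 0) + β) / p t (res ω t) π)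
              + Real.log (1 / δ) / β)),
        δ * ∏ t, (p t (res ω t) (ω t) * f t (res ω t) (ω t)) := by
        refine Finset.sum_le_sum fun ω hω => ?_
        have hcond := (Finset.mem_filter.mp hω).2
        have h1 := not_le.mp hcond
        have hprod : ∏ t, f t (res ω t) (ω t)
            = Real.exp (β * (∑ t, g t (res ω t) π)
              - β * ∑ t, (g t (res ω t) π * (if ω t = π then 1 else 0) + β) / p t (res ω t) π) := by
          rw [hfdef, ← Real.exp_sum]
          congr 1
          rw [Finset.mul_sum, Finset.mul_sum, ← Finset.sum_sub_distrib]
        have hL : β * (Real.log (1/δ) / β) = Real.log (1/δ) := by field_simp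
        have hlt : Real.log (1/δ) < β * (∑ t, g t (res ω t) π)
            - β * ∑ t, (g t (res ω t) π * (if ω t = π then 1 else 0) + β) / p t (res ω t) π := by
          have h2 := (mul_lt_mul_iff_right₀ hβ0).2 h1
          rw [mul_add, hL] at h2
          linarith
        have h3 : 1/δ ≤ ∏ t, f t (res ω t) (ω t) := by
          rw [hprod, ← Real.exp_log (show (0:ℝ) < 1/δ by positivity)]
          exact Real.exp_le_exp.2 hlt.le
        have h4 : (1:ℝ) ≤ δ * ∏ t, f t (res ω t) (ω t) := by
          have := mul_le_mul_of_nonneg_left h3 hδ0.le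
          rw [mul_one_div, div_self hδ0.ne'] at this
          exact this
        calc ∏ t, p t (res ω t) (ω t)
            ≤ (∏ t, p t (res ω t) (ω t)) * (δ * ∏ t, f t (res ω t) (ω t)) :=
              le_mul_of_one_le_right (Finset.prod_nonneg fun t _ => (hp_pos _ _ _).le) h4
          _ = δ * ∏ t, (p t (res ω t) (ω t) * f t (res ω t) (ω t)) := by
              rw [Finset.prod_mul_distrib]; ring
    _ ≤ ∑ ω : Fin T → ι, δ * ∏ t, (p t (res ω t) (ω t) * f t (res ω t) (ω t)) := by
        refine Finset.sum_le_sum_of_subset_of_nonneg (Finset.filter_subset _ _) fun ω _ _ => ?_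
        exact mul_nonneg hδ0.le (Finset.prod_nonneg fun t _ =>
          mul_nonneg (hp_pos _ _ _).le (hf0 _ _ _))
    _ = δ * ∑ ω : Fin T → ι, ∏ t, (p t (res ω t) (ω t) * f t (res ω t) (ω t)) := by
        rw [Finset.mul_sum]
    _ ≤ δ * 1 := mul_le_mul_of_nonneg_left hmain hδ0.le
    _ = δ := mul_one δ
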